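/- Let n ≥ 2 and let P ⊆ ℚⁿ be an H-polyhedron such that every point x ∈ P satisfies x_n ≥ (x_{n-1}² + x_{n-1})/2 (where x_{n-1} and x_n denote the last two coordinates, playing the roles of the time counter t and the register y). Then the set {t ∈ ℚ : ∃ x ∈ P, x_{n-1} = t ∧ x_n = (t² + t)/2} is finite. Consequently, no such polyhedron can contain, for every natural number i, a point with x_{n-1} = i and x_n = (i² + i)/2. -/

import Mathlib

/-- The parabola function `f(t) = (t² + t)/2`. -/
def parab (t : ℚ) : ℚ := (t ^ 2 + t) / 2

/-- An H-polyhedron in `ℚⁿ`: a finite intersection of closed half-spaces. -/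
def IsHPolyhedron {n : ℕ} (P : Set (Fin n → ℚ)) : Prop :=
  ∃ (m : ℕ) (a : Fin m → Fin n → ℚ) (b : Fin m → ℚ),
    P = ⋂ i : Fin m, {x : Fin n → ℚ | ∑ j, a i j * x j ≤ b i}

lemma parab_key {t1 t2 ε : ℚ} (hd : t1 ≠ t2) (hε : 0 < ε) :
    parab t1 + ε * (parab t1 - parab t2) < parab (t1 + ε * (t1 - t2)) := by
  have h2 : 0 < (t1 - t2) ^ 2 :=
    lt_of_le_of_ne (sq_nonneg _) (Ne.symm (pow_ne_zero 2 (sub_ne_zero.mpr hd)))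
  unfold parab
  nlinarith [mul_pos hε h2, mul_pos (mul_pos hε hε) h2]

lemma main_finite {n m : ℕ} (a : Fin m → Fin n → ℚ) (b : Fin m → ℚ) (i1 i2 : Fin n)
    (P : Set (Fin n → ℚ))
    (hPeq : P = ⋂ i : Fin m, {x : Fin n → ℚ | ∑ j, a i j * x j ≤ b i})
    (habove : ∀ x ∈ P, parab (x i1) ≤ x i2) :
    {t : ℚ | ∃ x ∈ P, x i1 = t ∧ x i2 = parab t}.Finite := by
  classical
  set S := {t : ℚ | ∃ x ∈ P, x i1 = t ∧ x i2 = parab t} with hSdef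
  have hwit : ∀ t : S, ∃ x, x ∈ P ∧ x i1 = (t : ℚ) ∧ x i2 = parab (t : ℚ) := by
    rintro ⟨t, ht⟩
    obtain ⟨x, hxP, h1, h2⟩ := ht
    exact ⟨x, hxP, h1, h2⟩
  choose w hw1 hw2 hw3 using hwit
  set s : S → Fin m → ℚ := fun t i => ∑ j, a i j * w t j with hsdef
  have hsle : ∀ (t : S) (i : Fin m), s t i ≤ b i := by
    intro t i
    have := hw1 t
    rw [hPeq] at this
    exact Set.mem_iInter.mp this i
  set F : S → Finset (Fin m) :=
    fun t => Finset.univ.filter (fun i => s t i = b i) with hFdef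
  have hinj : Function.Injective F := by
    intro t1 t2 hF
    by_contra hne
    have hd : (t1 : ℚ) ≠ (t2 : ℚ) := fun h => hne (Subtype.ext h)
    set x := w t1 with hx
    set x' := w t2 with hx'
    set c : Fin m → ℚ := fun i => ∑ j, a i j * (x j - x' j) with hc
    have hcs : ∀ i, c i = s t1 i - s t2 i := by
      intro i
      simp only [hc, hsdef, mul_sub, Finset.sum_sub_distrib]
      rfl
    have htight : ∀ i, s t1 i = b i ↔ s t2 i = b i := by
      intro i
      have h := Finset.ext_iff.mp hF i
      simpa [hFdef] using h
    set T : Finset ℚ :=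
      insert 1 ((Finset.univ.filter (fun i => s t1 i ≠ b i ∧ 0 < c i)).image
        (fun i => (b i - s t1 i) / c i)) with hT
    have hTne : T.Nonempty := ⟨1, Finset.mem_insert_self _ _⟩
    set ε := T.min' hTne with hεdef
    have hεpos : 0 < ε := by
      rw [hεdef]
      rw [Finset.lt_min'_iff]
      intro y hy
      rw [hT, Finset.mem_insert] at hy
      rcases hy with rfl | hy
      · norm_num
      · obtain ⟨i, hi, rfl⟩ := Finset.mem_image.mp hy
        obtain ⟨hne', hpos⟩ := (Finset.mem_filter.mp hi).2
        exact div_pos (lt_of_le_of_ne (hsle t1 i) hne' |> sub_pos.mpr) hpos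
    have hεle : ∀ i, s t1 i ≠ b i → 0 < c i → ε ≤ (b i - s t1 i) / c i := by
      intro i h1 h2
      apply Finset.min'_le
      rw [hT, Finset.mem_insert]
      right
      exact Finset.mem_image.mpr ⟨i, Finset.mem_filter.mpr ⟨Finset.mem_univ _, h1, h2⟩, rfl⟩
    set y : Fin n → ℚ := fun j => x j + ε * (x j - x' j) with hy
    have hy_s : ∀ i, ∑ j, a i j * y j = s t1 i + ε * c i := by
      intro i
      calc ∑ j, a i j * y j
          = ∑ j, (a i j * x j + ε * (a i j * (x j - x' j))) := by
            apply Finset.sum_congr rfl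
            intro j _
            simp only [hy]
            ring
        _ = s t1 i + ε * c i := by
            rw [Finset.sum_add_distrib, ← Finset.mul_sum]
    have hyP : y ∈ P := by
      rw [hPeq]
      refine Set.mem_iInter.mpr fun i => ?_
      show ∑ j, a i j * y j ≤ b i
      rw [hy_s i]
      by_cases h1 : s t1 i = b i
      · have h2 : s t2 i = b i := (htight i).mp h1
        have hc0 : c i = 0 := by rw [hcs, h1, h2]; ring
        rw [hc0, h1]
        simp
      · by_cases h3 : 0 < c i
        · have h4 := hεle i h1 h3
          have h5 : ε * c i ≤ b i - s t1 i := by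
            rw [le_div_iff₀ h3] at h4
            linarith
          linarith
        · push_neg at h3
          have : ε * c i ≤ 0 := mul_nonpos_of_nonneg_of_nonpos (le_of_lt hεpos) h3
          have := hsle t1 i
          linarith
    have hcontr := habove y hyP
    have hy1 : y i1 = (t1 : ℚ) + ε * ((t1 : ℚ) - (t2 : ℚ)) := by
      simp only [hy, hx, hx', hw2]
    have hy2 : y i2 = parab (t1 : ℚ) + ε * (parab (t1 : ℚ) - parab (t2 : ℚ)) := by
      simp only [hy, hx, hx', hw3]
    rw [hy1, hy2] at hcontr
    have := parab_key hd hεpos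
    linarith
  have : Finite S := Finite.of_injective F hinj
  exact Set.toFinite S

theorem hPolyhedron_above_parabola_finite {n : ℕ} (hn : 2 ≤ n)
    (P : Set (Fin n → ℚ)) (hP : IsHPolyhedron P)
    (habove : ∀ x ∈ P, parab (x ⟨n - 2, by omega⟩) ≤ x ⟨n - 1, by omega⟩) :
    {t : ℚ | ∃ x ∈ P, x ⟨n - 2, by omega⟩ = t ∧ x ⟨n - 1, by omega⟩ = parab t}.Finite ∧
    ¬ (∀ i : ℕ, ∃ x ∈ P, x ⟨n - 2, by omega⟩ = (i : ℚ) ∧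
        x ⟨n - 1, by omega⟩ = parab (i : ℚ)) := by
  obtain ⟨m, a, b, hPeq⟩ := hP
  have hfin := main_finite a b ⟨n - 2, by omega⟩ ⟨n - 1, by omega⟩ P hPeq
    (fun x hx => habove x hx)
  refine ⟨hfin, ?_⟩
  intro h
  have hinf : {t : ℚ | ∃ x ∈ P, x ⟨n - 2, by omega⟩ = t ∧
      x ⟨n - 1, by omega⟩ = parab t}.Infinite :=
    Set.infinite_of_injective_forall_mem (f := fun i : ℕ => (i : ℚ))
      Nat.cast_injective (fun i => h i)
  exact hinf hfin
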